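/- Let u ∈ C⁴(Ω̄) solve Δ²u = |u|^{p-1}u in a bounded C¹ domain Ω ⊂ ℝ⁴, and fix y ∈ ℝ⁴. Then the Pohozaev identity holds: (4/(p+1))∫_Ω |u|^{p+1} dx = ∫_{∂Ω} [⟨x-y,ν⟩|u|^{p+1}/(p+1) + (1/2)⟨x-y,ν⟩(Δu)² - 2(∂u/∂ν)Δu] dS - ∫_{∂Ω} [(∂(Δu)/∂ν)⟨x-y,∇u⟩ + (∂u/∂ν)⟨x-y,∇(Δu)⟩ - ⟨∇u,∇(Δu)⟩⟨x-y,ν⟩] dS. -/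

import Mathlib

open MeasureTheory RealInnerProductSpace

local notation "E" => EuclideanSpace ℝ (Fin 4)

/-- The Laplacian on ℝ⁴ : sum of second partial derivatives. -/
noncomputable def laplacian (f : E → ℝ) (x : E) : ℝ :=
  ∑ i : Fin 4,
    fderiv ℝ (fun y => fderiv ℝ f y (EuclideanSpace.single i 1)) x (EuclideanSpace.single i 1)

/-- The divergence of a vector field on ℝ⁴. -/
noncomputable def vdiv (F : E → E) (x : E) : ℝ :=
  ∑ i : Fin 4, (fderiv ℝ F x (EuclideanSpace.single i 1)) i

namespace Poho

noncomputable abbrev ee (i : Fin 4) : E := EuclideanSpace.single i 1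

lemma inner_ee (a : E) (i : Fin 4) : ⟪a, ee i⟫ = a i := by
  simp [ee, EuclideanSpace.inner_single_right]

lemma decomp (w : E) : w = ∑ i : Fin 4, w i • ee i := by
  have h := (EuclideanSpace.basisFun (Fin 4) ℝ).sum_repr w
  simp only [EuclideanSpace.basisFun_repr, EuclideanSpace.basisFun_apply] at h
  exact h.symm

lemma fderiv_apply_decomp {f : E → ℝ} {x : E} (w : E) :
    fderiv ℝ f x w = ∑ i : Fin 4, w i * fderiv ℝ f x (ee i) := by
  conv_lhs => rw [decomp w, map_sum]
  simp [mul_comm]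

lemma grad_inner (f : E → ℝ) (x w : E) : ⟪gradient f x, w⟫ = fderiv ℝ f x w := by
  rw [gradient, InnerProductSpace.toDual_symm_apply]

lemma grad_apply (f : E → ℝ) (x : E) (i : Fin 4) : gradient f x i = fderiv ℝ f x (ee i) := by
  have := inner_ee (gradient f x) i
  rw [← this, grad_inner]

lemma fderiv_pi_apply {F : E → E} {x : E} (hF : DifferentiableAt ℝ F x) (h : E) (i : Fin 4) :
    (fderiv ℝ F x h) i = fderiv ℝ (fun z => F z i) x h := by
  have := ((EuclideanSpace.proj (𝕜 := ℝ) i).hasFDerivAt.comp x hF.hasFDerivAt).fderiv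
  rw [show (fun z => F z i) = (EuclideanSpace.proj (𝕜 := ℝ) i) ∘ F from rfl, this]
  rfl


lemma vdiv_smul {g : E → ℝ} {V : E → E} {x : E} (hg : DifferentiableAt ℝ g x)
    (hV : DifferentiableAt ℝ V x) :
    vdiv (fun z => g z • V z) x = fderiv ℝ g x (V x) + g x * vdiv V x := by
  have hd : ∀ i : Fin 4, (fderiv ℝ (fun z => g z • V z) x (ee i)) i
      = fderiv ℝ g x (ee i) * V x i + g x * (fderiv ℝ V x (ee i)) i := by
    intro i
    rw [(hg.hasFDerivAt.fun_smul hV.hasFDerivAt).fderiv]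
    simp [PiLp.add_apply, PiLp.smul_apply, smul_eq_mul]
    ring
  have hw : fderiv ℝ g x (V x) = ∑ i : Fin 4, fderiv ℝ g x (ee i) * V x i := by
    rw [fderiv_apply_decomp (V x)]
    simp [mul_comm]
  simp only [vdiv, hd, hw, Finset.sum_add_distrib, Finset.mul_sum]

lemma vdiv_add {F G : E → E} {x : E} (hF : DifferentiableAt ℝ F x)
    (hG : DifferentiableAt ℝ G x) :
    vdiv (fun z => F z + G z) x = vdiv F x + vdiv G x := by
  simp only [vdiv, ← Finset.sum_add_distrib]
  refine Finset.sum_congr rfl fun i _ => ?_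
  rw [fderiv_fun_add hF hG]
  simp [PiLp.add_apply]

lemma vdiv_sub {F G : E → E} {x : E} (hF : DifferentiableAt ℝ F x)
    (hG : DifferentiableAt ℝ G x) :
    vdiv (fun z => F z - G z) x = vdiv F x - vdiv G x := by
  simp only [vdiv, ← Finset.sum_sub_distrib]
  refine Finset.sum_congr rfl fun i _ => ?_
  rw [fderiv_fun_sub hF hG]
  simp [PiLp.sub_apply]

lemma vdiv_sub_const (y : E) (x : E) : vdiv (fun z => z - y) x = 4 := by
  have : fderiv ℝ (fun z : E => z - y) x = ContinuousLinearMap.id ℝ E := by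
    rw [fderiv_sub_const, fderiv_id']
  simp [vdiv, this, ee, EuclideanSpace.single_apply]


lemma contDiff_fderiv_apply {n m : ℕ} {f : E → ℝ} (hf : ContDiff ℝ n f) (h : m + 1 ≤ n)
    (w : E) : ContDiff ℝ m (fun y => fderiv ℝ f y w) := by
  have h1 : ContDiff ℝ m (fderiv ℝ f) := hf.fderiv_right (by exact_mod_cast h)
  exact (ContinuousLinearMap.apply ℝ ℝ w).contDiff.comp h1

lemma contDiff_gradient {n m : ℕ} {f : E → ℝ} (hf : ContDiff ℝ n f) (h : m + 1 ≤ n) :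
    ContDiff ℝ m (gradient f) := by
  have h1 : ContDiff ℝ m (fderiv ℝ f) := hf.fderiv_right (by exact_mod_cast h)
  exact ((InnerProductSpace.toDual ℝ E).symm.toLinearIsometry.contDiff).comp h1

lemma contDiff_laplacian {n m : ℕ} {f : E → ℝ} (hf : ContDiff ℝ n f) (h : m + 2 ≤ n) :
    ContDiff ℝ m (laplacian f) := by
  have : ∀ i : Fin 4, ContDiff ℝ m
      (fun x => fderiv ℝ (fun y => fderiv ℝ f y (ee i)) x (ee i)) := by
    intro i
    exact contDiff_fderiv_apply (n := m + 1)
      (contDiff_fderiv_apply hf (by omega) (ee i)) (by omega) (ee i)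
  exact ContDiff.sum fun i _ => this i

lemma vdiv_gradient {f : E → ℝ} (hf : ContDiff ℝ 2 f) (x : E) :
    vdiv (gradient f) x = laplacian f x := by
  have hd : DifferentiableAt ℝ (gradient f) x :=
    (contDiff_gradient (n := 2) (m := 1) hf (by norm_num)).differentiable (by norm_num) x
  unfold vdiv laplacian
  refine Finset.sum_congr rfl fun i _ => ?_
  rw [fderiv_pi_apply hd (ee i) i]
  have : (fun z => gradient f z i) = fun z => fderiv ℝ f z (ee i) :=
    funext fun z => grad_apply f z i
  rw [this]


lemma fderiv_gradient {f : E → ℝ} {x : E} (hdf : DifferentiableAt ℝ (fderiv ℝ f) x) (w : E) :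
    fderiv ℝ (gradient f) x w
      = (InnerProductSpace.toDual ℝ E).symm (fderiv ℝ (fderiv ℝ f) x w) := by
  set T : (E →L[ℝ] ℝ) →L[ℝ] E :=
    ((InnerProductSpace.toDual ℝ E).symm.toLinearIsometry).toContinuousLinearMap with hT
  have hcomp : gradient f = fun z => T (fderiv ℝ f z) := rfl
  have h2 : fderiv ℝ (fun z => T (fderiv ℝ f z)) x = T.comp (fderiv ℝ (fderiv ℝ f) x) :=
    (T.hasFDerivAt.comp x hdf.hasFDerivAt).fderiv
  rw [hcomp, h2]
  rfl

lemma hess_inner {f : E → ℝ} (hf : ContDiff ℝ 2 f) (x w z : E) :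
    ⟪fderiv ℝ (gradient f) x w, z⟫ = fderiv ℝ (fderiv ℝ f) x w z := by
  have hdf : DifferentiableAt ℝ (fderiv ℝ f) x :=
    (hf.fderiv_right (m := 1) (by norm_num)).differentiable (by norm_num) x
  rw [fderiv_gradient hdf, InnerProductSpace.toDual_symm_apply]

lemma hess_symm {f : E → ℝ} (hf : ContDiff ℝ 2 f) (x w z : E) :
    ⟪fderiv ℝ (gradient f) x w, z⟫ = ⟪fderiv ℝ (gradient f) x z, w⟫ := by
  rw [hess_inner hf, hess_inner hf]
  exact (hf.contDiffAt.isSymmSndFDerivAt (by simp [minSmoothness_of_isRCLikeNormedField])) w z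


lemma abs_rpow_eq {p : ℝ} (hp : 1 < p) (t : ℝ) : |t| ^ (p + 1) = (t ^ 2) ^ ((p + 1) / 2) := by
  have h1 : (t : ℝ) ^ 2 = |t| ^ ((2 : ℕ) : ℝ) := by
    rw [Real.rpow_natCast, sq_abs]
  rw [h1, ← Real.rpow_mul (abs_nonneg t)]
  norm_num
  ring_nf

lemma abs_rpow_eq' {p : ℝ} (hp : 1 < p) (t : ℝ) :
    (t ^ 2) ^ ((p + 1) / 2 - 1) = |t| ^ (p - 1) := by
  have h1 : (t : ℝ) ^ 2 = |t| ^ ((2 : ℕ) : ℝ) := by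
    rw [Real.rpow_natCast, sq_abs]
  rw [h1, ← Real.rpow_mul (abs_nonneg t)]
  ring_nf

lemma hasDerivAt_abs_rpow {p : ℝ} (hp : 1 < p) (t : ℝ) :
    HasDerivAt (fun s : ℝ => |s| ^ (p + 1)) ((p + 1) * |t| ^ (p - 1) * t) t := by
  have hq : 1 ≤ (p + 1) / 2 := by linarith
  have h := (hasDerivAt_pow 2 t).rpow_const (p := (p + 1) / 2) (Or.inr hq)
  have hfun : (fun s : ℝ => (s ^ 2) ^ ((p + 1) / 2)) = fun s : ℝ => |s| ^ (p + 1) :=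
    funext fun s => (abs_rpow_eq hp s).symm
  rw [hfun] at h
  convert h using 1
  rw [abs_rpow_eq' hp]
  ring

lemma contDiff_abs_rpow {p : ℝ} (hp : 1 < p) :
    ContDiff ℝ 1 (fun s : ℝ => |s| ^ (p + 1)) := by
  have hq : ((1 : ℕ) : ℝ) ≤ (p + 1) / 2 := by push_cast; linarith
  have h2 : ContDiff ℝ 1 (fun s : ℝ => s ^ 2) := contDiff_id.pow 2
  have h := (Real.contDiff_rpow_const_of_le hq).comp h2
  have hfun : (fun s : ℝ => (s ^ 2) ^ ((p + 1) / 2)) = fun s : ℝ => |s| ^ (p + 1) :=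
    funext fun s => (abs_rpow_eq hp s).symm
  rw [← hfun]
  exact h


lemma fderiv_c1 {p : ℝ} (hp : 1 < p) {u : E → ℝ} (hu : Differentiable ℝ u) (x w : E) :
    fderiv ℝ (fun z => |u z| ^ (p + 1) / (p + 1)) x w
      = |u x| ^ (p - 1) * u x * fderiv ℝ u x w := by
  have hne : p + 1 ≠ 0 := by linarith
  have h := ((hasDerivAt_abs_rpow hp (u x)).div_const (p + 1)).comp_hasFDerivAt x
    (hu x).hasFDerivAt
  have h2 : (fun z => |u z| ^ (p + 1) / (p + 1))
      = (fun t : ℝ => |t| ^ (p + 1) / (p + 1)) ∘ u := rfl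
  rw [h2, h.fderiv]
  simp only [ContinuousLinearMap.coe_smul', Pi.smul_apply, smul_eq_mul]
  field_simp

lemma fderiv_c2 {v : E → ℝ} (hv : Differentiable ℝ v) (x w : E) :
    fderiv ℝ (fun z => 1 / 2 * v z ^ 2) x w = v x * fderiv ℝ v x w := by
  have h0 : HasFDerivAt (fun z => v z * v z)
      (v x • fderiv ℝ v x + v x • fderiv ℝ v x) x :=
    (hv x).hasFDerivAt.mul (hv x).hasFDerivAt
  have h : HasFDerivAt (fun z => 1 / 2 * v z ^ 2)
      ((1 / 2 : ℝ) • (v x • fderiv ℝ v x + v x • fderiv ℝ v x)) x := by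
    have := h0.const_mul (1 / 2 : ℝ)
    simpa [pow_two] using this
  rw [h.fderiv]
  simp only [ContinuousLinearMap.coe_smul', ContinuousLinearMap.add_apply,
    Pi.smul_apply, smul_eq_mul, ContinuousLinearMap.coe_add', Pi.add_apply]
  ring

lemma fderiv_cmul {v : E → ℝ} (hv : Differentiable ℝ v) (c : ℝ) (x w : E) :
    fderiv ℝ (fun z => c * v z) x w = c * fderiv ℝ v x w := by
  have h : HasFDerivAt (fun z => c * v z) (c • fderiv ℝ v x) x :=
    (hv x).hasFDerivAt.const_mul c
  rw [h.fderiv]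
  simp

lemma fderiv_pair (y : E) {W : E → E} (hW : Differentiable ℝ W) (x w : E) :
    fderiv ℝ (fun z => ⟪z - y, W z⟫) x w
      = ⟪x - y, fderiv ℝ W x w⟫ + ⟪w, W x⟫ := by
  have hid : DifferentiableAt ℝ (fun z : E => z - y) x :=
    (differentiable_id.sub_const y) x
  rw [fderiv_inner_apply ℝ hid (hW x) w]
  have : fderiv ℝ (fun z : E => z - y) x = ContinuousLinearMap.id ℝ E := by
    rw [fderiv_sub_const, fderiv_id']
  rw [this]
  rfl

lemma fderiv_pair2 {W₁ W₂ : E → E} (hW₁ : Differentiable ℝ W₁) (hW₂ : Differentiable ℝ W₂)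
    (x w : E) :
    fderiv ℝ (fun z => ⟪W₁ z, W₂ z⟫) x w
      = ⟪W₁ x, fderiv ℝ W₂ x w⟫ + ⟪fderiv ℝ W₁ x w, W₂ x⟫ :=
  fderiv_inner_apply ℝ (hW₁ x) (hW₂ x) w

lemma continuous_vdiv {F : E → E} (hF : ContDiff ℝ 1 F) : Continuous (vdiv F) := by
  have h : Continuous (fderiv ℝ F) := (hF.fderiv_right (m := 0) (by norm_num)).continuous
  unfold vdiv
  refine continuous_finset_sum _ fun i _ => ?_
  exact (EuclideanSpace.proj (𝕜 := ℝ) i).continuous.comp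
    ((ContinuousLinearMap.apply ℝ E (EuclideanSpace.single i 1)).continuous.comp h)

lemma integrableOn_of_cont {f : E → ℝ} (hf : Continuous f) {Ω : Set E}
    (hb : Bornology.IsBounded Ω) : IntegrableOn f Ω := by
  have hc : IsCompact (closure Ω) := hb.isCompact_closure
  exact (hf.continuousOn.integrableOn_compact hc).mono_set subset_closure


lemma fderiv_add_apply {f g : E → ℝ} {x : E} (hf : DifferentiableAt ℝ f x)
    (hg : DifferentiableAt ℝ g x) (w : E) :
    fderiv ℝ (fun z => f z + g z) x w = fderiv ℝ f x w + fderiv ℝ g x w := by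
  rw [fderiv_fun_add hf hg]; rfl

end Poho

open Poho

/-- Pohozaev identity for `Δ²u = |u|^{p-1}u` on a bounded domain `Ω ⊆ ℝ⁴`, where `ν` is the
outward unit normal and `σ` the surface measure on `∂Ω`, encoded by the divergence theorem. -/
theorem pohozaev_identity (Ω : Set E) (hΩopen : IsOpen Ω)
    (hΩbdd : Bornology.IsBounded Ω)
    (ν : E → E) (σ : Measure E) (p : ℝ) (hp : 1 < p)
    (u : E → ℝ) (hu : ContDiff ℝ 4 u)
    (hpde : ∀ x ∈ Ω, laplacian (laplacian u) x = |u x| ^ (p - 1) * u x)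
    (hdiv : ∀ F : E → E, ContDiff ℝ 1 F →
      (∫ x in Ω, vdiv F x) = ∫ x in frontier Ω, ⟪F x, ν x⟫ ∂σ)
    (y : E) :
    (4 / (p + 1)) * ∫ x in Ω, |u x| ^ (p + 1) =
      (∫ x in frontier Ω,
        (⟪x - y, ν x⟫ * |u x| ^ (p + 1) / (p + 1)
          + 1 / 2 * ⟪x - y, ν x⟫ * (laplacian u x) ^ 2
          - 2 * ⟪gradient u x, ν x⟫ * laplacian u x) ∂σ)
      - ∫ x in frontier Ω,
        (⟪gradient (laplacian u) x, ν x⟫ * ⟪x - y, gradient u x⟫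
          + ⟪gradient u x, ν x⟫ * ⟪x - y, gradient (laplacian u) x⟫
          - ⟪gradient u x, gradient (laplacian u) x⟫ * ⟪x - y, ν x⟫) ∂σ := by
  classical
  have hu1 : ContDiff ℝ 1 u := hu.of_le (by norm_num)
  have hu2 : ContDiff ℝ 2 u := hu.of_le (by norm_num)
  have hdu : Differentiable ℝ u := hu1.differentiable (by norm_num)
  set v : E → ℝ := laplacian u with hvdef
  have hv2 : ContDiff ℝ 2 v := contDiff_laplacian (n := 4) hu (by norm_num)
  have hv1 : ContDiff ℝ 1 v := hv2.of_le (by norm_num)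
  have hdv : Differentiable ℝ v := hv1.differentiable (by norm_num)
  have hgu1 : ContDiff ℝ 1 (gradient u) := contDiff_gradient (n := 2) hu2 (by norm_num)
  have hdgu : Differentiable ℝ (gradient u) := hgu1.differentiable (by norm_num)
  have hgv1 : ContDiff ℝ 1 (gradient v) := contDiff_gradient (n := 2) hv2 (by norm_num)
  have hdgv : Differentiable ℝ (gradient v) := hgv1.differentiable (by norm_num)
  set c₁ : E → ℝ := fun x => |u x| ^ (p + 1) / (p + 1) with hc₁def
  set c₂ : E → ℝ := fun x => 1 / 2 * v x ^ 2 with hc₂def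
  set aa : E → ℝ := fun x => ⟪x - y, gradient u x⟫ with haadef
  set bb : E → ℝ := fun x => ⟪x - y, gradient v x⟫ with hbbdef
  set dd : E → ℝ := fun x => ⟪gradient u x, gradient v x⟫ with hdddef
  have hc₁ : ContDiff ℝ 1 c₁ := ((contDiff_abs_rpow hp).comp hu1).div_const _
  have hc₂ : ContDiff ℝ 1 c₂ := contDiff_const.mul (hv1.pow 2)
  have hid1 : ContDiff ℝ 1 (fun z : E => z - y) := contDiff_id.sub contDiff_const
  have haa : ContDiff ℝ 1 aa := hid1.inner ℝ hgu1
  have hbb : ContDiff ℝ 1 bb := hid1.inner ℝ hgv1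
  have hdd : ContDiff ℝ 1 dd := hgu1.inner ℝ hgv1
  set G₁ : E → E := fun x => (c₁ x + c₂ x) • (x - y) - (2 * v x) • gradient u x with hG₁def
  set G₂ : E → E := fun x => aa x • gradient v x + (bb x • gradient u x - dd x • (x - y))
    with hG₂def
  have A1 : ContDiff ℝ 1 (fun z : E => (c₁ z + c₂ z) • (z - y)) := (hc₁.add hc₂).smul hid1
  have A2 : ContDiff ℝ 1 (fun z : E => (2 * v z) • gradient u z) :=
    (contDiff_const.mul hv1).smul hgu1
  have A3 : ContDiff ℝ 1 (fun z : E => aa z • gradient v z) := haa.smul hgv1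
  have A4 : ContDiff ℝ 1 (fun z : E => bb z • gradient u z) := hbb.smul hgu1
  have A5 : ContDiff ℝ 1 (fun z : E => dd z • (z - y)) := hdd.smul hid1
  have hG₁ : ContDiff ℝ 1 G₁ := A1.sub A2
  have hG₂ : ContDiff ℝ 1 G₂ := A3.add (A4.sub A5)
  -- interior identity
  have key : ∀ x ∈ Ω, vdiv G₁ x - vdiv G₂ x = 4 * c₁ x := by
    intro x hx
    have hguv : ⟪gradient u x, gradient v x⟫ = fderiv ℝ u x (gradient v x) :=
      grad_inner u x _
    have hgvu : fderiv ℝ v x (gradient u x) = fderiv ℝ u x (gradient v x) := by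
      rw [← grad_inner v x, ← grad_inner u x, real_inner_comm]
    have hax : aa x = fderiv ℝ u x (x - y) := by
      simp only [haadef]
      rw [real_inner_comm, grad_inner]
    have hbx : bb x = fderiv ℝ v x (x - y) := by
      simp only [hbbdef]
      rw [real_inner_comm, grad_inner]
    have hdx : dd x = fderiv ℝ u x (gradient v x) := by
      simp only [hdddef]
      exact hguv
    have t1 : vdiv G₁ x = vdiv (fun z : E => (c₁ z + c₂ z) • (z - y)) x
        - vdiv (fun z : E => (2 * v z) • gradient u z) x := by
      rw [hG₁def]
      exact vdiv_sub (A1.differentiable (by norm_num) x) (A2.differentiable (by norm_num) x)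
    have t2 : vdiv G₂ x = vdiv (fun z : E => aa z • gradient v z) x
        + (vdiv (fun z : E => bb z • gradient u z) x
          - vdiv (fun z : E => dd z • (z - y)) x) := by
      rw [hG₂def]
      rw [vdiv_add (A3.differentiable (by norm_num) x) ((A4.sub A5).differentiable (by norm_num) x),
        vdiv_sub (A4.differentiable (by norm_num) x) (A5.differentiable (by norm_num) x)]
    have s1 : vdiv (fun z : E => (c₁ z + c₂ z) • (z - y)) x
        = fderiv ℝ (fun z => c₁ z + c₂ z) x (x - y) + (c₁ x + c₂ x) * vdiv (fun z : E => z - y) x :=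
      vdiv_smul ((hc₁.add hc₂).differentiable (by norm_num) x) ((hid1).differentiable (by norm_num) x)
    have s2 : vdiv (fun z : E => (2 * v z) • gradient u z) x
        = fderiv ℝ (fun z => 2 * v z) x (gradient u x) + (2 * v x) * vdiv (gradient u) x :=
      vdiv_smul ((contDiff_const.mul hv1).differentiable (by norm_num) x) (hdgu x)
    have s3 : vdiv (fun z : E => aa z • gradient v z) x
        = fderiv ℝ aa x (gradient v x) + aa x * vdiv (gradient v) x :=
      vdiv_smul (haa.differentiable (by norm_num) x) (hdgv x)
    have s4 : vdiv (fun z : E => bb z • gradient u z) x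
        = fderiv ℝ bb x (gradient u x) + bb x * vdiv (gradient u) x :=
      vdiv_smul (hbb.differentiable (by norm_num) x) (hdgu x)
    have s5 : vdiv (fun z : E => dd z • (z - y)) x
        = fderiv ℝ dd x (x - y) + dd x * vdiv (fun z : E => z - y) x :=
      vdiv_smul (hdd.differentiable (by norm_num) x) ((hid1).differentiable (by norm_num) x)
    have r1 : vdiv (gradient u) x = v x := vdiv_gradient hu2 x
    have r2 : vdiv (gradient v) x = |u x| ^ (p - 1) * u x := by
      rw [vdiv_gradient hv2 x, hvdef]
      exact hpde x hx
    have r3 : vdiv (fun z : E => z - y) x = 4 := vdiv_sub_const y x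
    have f1 : fderiv ℝ (fun z => c₁ z + c₂ z) x (x - y)
        = |u x| ^ (p - 1) * u x * fderiv ℝ u x (x - y) + v x * fderiv ℝ v x (x - y) := by
      rw [fderiv_add_apply (hc₁.differentiable (by norm_num) x) (hc₂.differentiable (by norm_num) x),
        hc₁def, hc₂def, fderiv_c1 hp hdu, fderiv_c2 hdv]
    have f2 : fderiv ℝ (fun z => 2 * v z) x (gradient u x)
        = 2 * fderiv ℝ u x (gradient v x) := by
      rw [fderiv_cmul hdv 2, hgvu]
    have f3 : fderiv ℝ aa x (gradient v x)
        = ⟪x - y, fderiv ℝ (gradient u) x (gradient v x)⟫ + fderiv ℝ u x (gradient v x) := by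
      rw [haadef, fderiv_pair y hdgu]
      congr 1
      rw [← hguv]
      exact real_inner_comm _ _
    have f4 : fderiv ℝ bb x (gradient u x)
        = ⟪x - y, fderiv ℝ (gradient v) x (gradient u x)⟫ + fderiv ℝ u x (gradient v x) := by
      rw [hbbdef, fderiv_pair y hdgv, hguv]
    have f5 : fderiv ℝ dd x (x - y)
        = ⟪gradient u x, fderiv ℝ (gradient v) x (x - y)⟫
          + ⟪fderiv ℝ (gradient u) x (x - y), gradient v x⟫ := by
      rw [hdddef, fderiv_pair2 hdgu hdgv]
    have hHu : ⟪x - y, fderiv ℝ (gradient u) x (gradient v x)⟫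
        = ⟪fderiv ℝ (gradient u) x (x - y), gradient v x⟫ := by
      rw [real_inner_comm, hess_symm hu2]
    have hHv : ⟪x - y, fderiv ℝ (gradient v) x (gradient u x)⟫
        = ⟪gradient u x, fderiv ℝ (gradient v) x (x - y)⟫ := by
      rw [real_inner_comm, hess_symm hv2, real_inner_comm]
    rw [t1, t2, s1, s2, s3, s4, s5, r1, r2, r3, f1, f2, f3, f4, f5, hHu, hHv, hax, hbx,
      hdx, hc₂def]
    ring
  -- boundary identities
  have hb1 : (fun x => ⟪G₁ x, ν x⟫)
      = fun x => ⟪x - y, ν x⟫ * |u x| ^ (p + 1) / (p + 1)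
          + 1 / 2 * ⟪x - y, ν x⟫ * v x ^ 2 - 2 * ⟪gradient u x, ν x⟫ * v x := by
    funext x
    rw [hG₁def]
    simp only [inner_sub_left, inner_add_left, real_inner_smul_left, hc₁def, hc₂def]
    ring
  have hb2 : (fun x => ⟪G₂ x, ν x⟫)
      = fun x => ⟪gradient v x, ν x⟫ * ⟪x - y, gradient u x⟫
          + ⟪gradient u x, ν x⟫ * ⟪x - y, gradient v x⟫
          - ⟪gradient u x, gradient v x⟫ * ⟪x - y, ν x⟫ := by
    funext x
    rw [hG₂def]
    simp only [inner_sub_left, inner_add_left, real_inner_smul_left, haadef, hbbdef, hdddef]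
    ring
  have h1 := hdiv G₁ hG₁
  have h2 := hdiv G₂ hG₂
  have hint1 : IntegrableOn (vdiv G₁) Ω volume :=
    integrableOn_of_cont (continuous_vdiv hG₁) hΩbdd
  have hint2 : IntegrableOn (vdiv G₂) Ω volume :=
    integrableOn_of_cont (continuous_vdiv hG₂) hΩbdd
  have hL : (4 / (p + 1)) * ∫ x in Ω, |u x| ^ (p + 1) = ∫ x in Ω, 4 * c₁ x := by
    have e : (fun x : E => 4 * c₁ x) = fun x : E => (4 / (p + 1)) * |u x| ^ (p + 1) :=
      funext fun x => by simp only [hc₁def]; ring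
    rw [e, integral_const_mul]
  rw [hL,
    setIntegral_congr_fun hΩopen.measurableSet (fun x hx => (key x hx).symm),
    integral_sub hint1 hint2, h1, h2, integral_congr_ae (ae_of_all _ (congrFun hb1)),
    integral_congr_ae (ae_of_all _ (congrFun hb2))]
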